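/- Under the hypotheses of the general-divergence theorem (odd part of C converges to f_1, even part to f_2, f_1 ≠ f_2, bounds on |b_i| and |a_{2i+1}/a_{2i}|), if C converged generally to a finite value f with f ≠ f_1 and f ≠ f_2, witnessed by sequences v_n, w_n, then the sequences of even-indexed witnesses satisfy lim_{n→∞} d(v_{2n}, w_{2n}) = 0, contradicting liminf d(v_n, w_n) > 0. Hence any finite general limit must equal f_1 or f_2. -/

import Mathlib

open Filter Topology

set_option maxHeartbeats 1000000

/-- The chordal metric on the Riemann sphere `ℂ ∪ {∞}`, modelled as `Option ℂ`
with `none = ∞`. -/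
noncomputable def chordal : Option ℂ → Option ℂ → ℝ
  | some w, some z =>
      ‖z - w‖ /
        (Real.sqrt (1 + ‖w‖ ^ 2) * Real.sqrt (1 + ‖z‖ ^ 2))
  | some w, none => 1 / Real.sqrt (1 + ‖w‖ ^ 2)
  | none, some z => 1 / Real.sqrt (1 + ‖z‖ ^ 2)
  | none, none => 0

/-- The modified approximant `S_n(w) = (A_n + w A_{n-1})/(B_n + w B_{n-1})` on the
Riemann sphere `Option ℂ`; `A (n+1)`, `B (n+1)` correspond to subscript `n`. -/
noncomputable def modApprox (A B : ℕ → ℂ) (n : ℕ) : Option ℂ → Option ℂ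
  | some w =>
      if B (n + 1) + w * B n = 0 then none
      else some ((A (n + 1) + w * A n) / (B (n + 1) + w * B n))
  | none => if B n = 0 then none else some (A n / B n)

private lemma q_sq (x : ℂ) : Real.sqrt (1 + ‖x‖ ^ 2) ^ 2 = 1 + ‖x‖ ^ 2 :=
  Real.sq_sqrt (by positivity)

private lemma q_pos (x : ℂ) : 0 < Real.sqrt (1 + ‖x‖ ^ 2) :=
  Real.sqrt_pos.2 (by positivity)

private lemma one_le_q (x : ℂ) : 1 ≤ Real.sqrt (1 + ‖x‖ ^ 2) := by
  nlinarith [q_sq x, q_pos x, norm_nonneg x]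

private lemma q_le (x : ℂ) : Real.sqrt (1 + ‖x‖ ^ 2) ≤ 1 + ‖x‖ := by
  nlinarith [q_sq x, q_pos x, norm_nonneg x]

private lemma chordal_nonneg (x y : Option ℂ) : 0 ≤ chordal x y := by
  cases x <;> cases y <;> (simp only [chordal]; positivity)

private lemma det_ne (a b A B : ℕ → ℂ) (hane : ∀ i, 1 ≤ i → a i ≠ 0)
    (hA0 : A 0 = 1) (hA1 : A 1 = b 0) (hB0 : B 0 = 0) (hB1 : B 1 = 1)
    (hA : ∀ n, A (n + 2) = b (n + 1) * A (n + 1) + a (n + 1) * A n)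
    (hB : ∀ n, B (n + 2) = b (n + 1) * B (n + 1) + a (n + 1) * B n) :
    ∀ m, A (m + 1) * B m - A m * B (m + 1) ≠ 0 := by
  intro m
  induction m with
  | zero => simp [hA0, hA1, hB0, hB1]
  | succ k ih =>
    have h : A (k + 2) * B (k + 1) - A (k + 1) * B (k + 2)
        = -a (k + 1) * (A (k + 1) * B k - A k * B (k + 1)) := by
      rw [hA k, hB k]; ring
    show A (k + 2) * B (k + 1) - A (k + 1) * B (k + 2) ≠ 0
    rw [h]
    exact mul_ne_zero (neg_ne_zero.2 (hane _ (by omega))) ih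

private lemma term_lb (Az Bz x f : ℂ) (c M : ℝ) (hc : 0 < c) (hM : 0 ≤ M)
    (hxM : ‖x‖ ≤ M) (hxf : ‖x - f‖ ≤ c / 2)
    (h : c * Real.sqrt (‖Az‖ ^ 2 + ‖Bz‖ ^ 2) ≤ ‖Az - f * Bz‖) :
    c / (2 * (1 + M)) * (Real.sqrt (1 + ‖x‖ ^ 2)
        * Real.sqrt (‖Az‖ ^ 2 + ‖Bz‖ ^ 2)) ≤ ‖Az - x * Bz‖ := by
  set s := Real.sqrt (‖Az‖ ^ 2 + ‖Bz‖ ^ 2) with hs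
  have hs0 : 0 ≤ s := Real.sqrt_nonneg _
  have hssq : s ^ 2 = ‖Az‖ ^ 2 + ‖Bz‖ ^ 2 := Real.sq_sqrt (by positivity)
  have hBs : ‖Bz‖ ≤ s := by
    nlinarith [norm_nonneg Az, norm_nonneg Bz]
  have h1 : ‖Az - f * Bz‖ - ‖(x - f) * Bz‖ ≤ ‖Az - x * Bz‖ := by
    have h2 : Az - x * Bz = (Az - f * Bz) - (x - f) * Bz := by ring
    rw [h2]
    simpa using norm_sub_norm_le (Az - f * Bz) ((x - f) * Bz)
  have h3 : ‖(x - f) * Bz‖ ≤ (c / 2) * s := by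
    rw [norm_mul]
    exact mul_le_mul hxf hBs (norm_nonneg _) (by positivity)
  have h4 : (c / 2) * s ≤ ‖Az - x * Bz‖ := by linarith
  have hq : Real.sqrt (1 + ‖x‖ ^ 2) ≤ 1 + M := le_trans (q_le x) (by linarith)
  have : c / (2 * (1 + M)) * (Real.sqrt (1 + ‖x‖ ^ 2) * s) ≤ c / 2 * s := by
    have h5 : Real.sqrt (1 + ‖x‖ ^ 2) * s ≤ (1 + M) * s :=
      mul_le_mul_of_nonneg_right hq hs0
    calc c / (2 * (1 + M)) * (Real.sqrt (1 + ‖x‖ ^ 2) * s)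
        ≤ c / (2 * (1 + M)) * ((1 + M) * s) := by
          apply mul_le_mul_of_nonneg_left h5 (by positivity)
      _ = c / 2 * s := by field_simp
  linarith

private lemma sqrt_lb {t S : ℝ} (ht : 0 ≤ t) (h : t ^ 2 ≤ S) : t ≤ Real.sqrt S := by
  have := Real.sqrt_le_sqrt h
  rwa [Real.sqrt_sq ht] at this

private lemma cauchy2 (p q r t : ℝ) (hp : 0 ≤ p) (hq : 0 ≤ q) (hr : 0 ≤ r) (ht : 0 ≤ t) :
    p * q + r * t ≤ Real.sqrt (p ^ 2 + r ^ 2) * Real.sqrt (q ^ 2 + t ^ 2) := by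
  have h : (p * q + r * t) ^ 2 ≤ (p ^ 2 + r ^ 2) * (q ^ 2 + t ^ 2) := by
    nlinarith [sq_nonneg (p * t - r * q)]
  have h2 := sqrt_lb (by positivity) h
  rwa [Real.sqrt_mul (by positivity)] at h2

private lemma s_pos {Az Bz : ℂ} (h : ¬(Az = 0 ∧ Bz = 0)) :
    0 < Real.sqrt (‖Az‖ ^ 2 + ‖Bz‖ ^ 2) := by
  apply Real.sqrt_pos.2
  rcases eq_or_ne Az 0 with h1 | h1
  · have h2 : Bz ≠ 0 := fun h2 => h ⟨h1, h2⟩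
    have h4 := pow_pos (norm_pos_iff.mpr h2) 2
    have h3 : (0:ℝ) ≤ ‖Az‖ ^ 2 := by positivity
    linarith
  · have h4 := pow_pos (norm_pos_iff.mpr h1) 2
    have h3 : (0:ℝ) ≤ ‖Bz‖ ^ 2 := by positivity
    linarith

private lemma s_eq (Az Bz : ℂ) (hB : Bz ≠ 0) :
    Real.sqrt (‖Az‖ ^ 2 + ‖Bz‖ ^ 2)
      = Real.sqrt (1 + ‖Az / Bz‖ ^ 2) * ‖Bz‖ := by
  have hB' : ‖Bz‖ ≠ 0 := norm_ne_zero_iff.mpr hB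
  have h1 : ‖Az‖ ^ 2 + ‖Bz‖ ^ 2
      = (1 + ‖Az / Bz‖ ^ 2) * ‖Bz‖ ^ 2 := by
    rw [norm_div]
    field_simp
    ring
  rw [h1, Real.sqrt_mul (by positivity), Real.sqrt_sq (norm_nonneg _)]

private lemma ev_lb (f g : ℂ) (c : ℝ) (hc : 0 < c) (hc1 : c ≤ 1)
    (hcle : c ≤ (‖f - g‖ / 2) / (2 + ‖g‖))
    (Az Bz : ℂ) (hnz : ¬(Az = 0 ∧ Bz = 0))
    (hclose : ‖Az / Bz - g‖ < min 1 (‖f - g‖ / 2)) :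
    c * Real.sqrt (‖Az‖ ^ 2 + ‖Bz‖ ^ 2) ≤ ‖Az - f * Bz‖ := by
  by_cases hB : Bz = 0
  · subst hB
    have hA : Az ≠ 0 := fun h => hnz ⟨h, rfl⟩
    have h1 : ‖Az‖ ^ 2 + ‖(0:ℂ)‖ ^ 2 = ‖Az‖ ^ 2 := by
      simp
    rw [h1, Real.sqrt_sq (norm_nonneg _), mul_zero, sub_zero]
    nlinarith [norm_nonneg Az]
  · set t := Az / Bz with ht
    have hB' : ‖Bz‖ ≠ 0 := norm_ne_zero_iff.mpr hB
    have hBpos : 0 < ‖Bz‖ := norm_pos_iff.mpr hB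
    have h1 : ‖t - g‖ < 1 := lt_of_lt_of_le hclose (min_le_left _ _)
    have h2 : ‖t - g‖ < ‖f - g‖ / 2 := lt_of_lt_of_le hclose (min_le_right _ _)
    have htf : ‖f - g‖ / 2 ≤ ‖t - f‖ := by
      have htri : ‖f - g‖ ≤ ‖f - t‖ + ‖t - g‖ := by
        calc ‖f - g‖ = ‖(f - t) + (t - g)‖ := by congr 1; ring
          _ ≤ _ := norm_add_le _ _
      have hsym : ‖f - t‖ = ‖t - f‖ := by
        rw [← norm_neg]; ring_nf
      linarith
    have htabs : ‖t‖ ≤ ‖g‖ + 1 := by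
      have h3 : ‖t‖ ≤ ‖t - g‖ + ‖g‖ := by
        calc ‖t‖ = ‖(t - g) + g‖ := by congr 1; ring
          _ ≤ _ := norm_add_le _ _
      linarith
    have hq : Real.sqrt (1 + ‖t‖ ^ 2) ≤ 2 + ‖g‖ :=
      le_trans (q_le t) (by linarith)
    have hstep : c * Real.sqrt (1 + ‖t‖ ^ 2) ≤ ‖t - f‖ := by
      have h3 : c * (2 + ‖g‖) ≤ ‖f - g‖ / 2 :=
        (le_div_iff₀ (by positivity)).1 hcle
      calc c * Real.sqrt (1 + ‖t‖ ^ 2) ≤ c * (2 + ‖g‖) :=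
            mul_le_mul_of_nonneg_left hq hc.le
        _ ≤ ‖f - g‖ / 2 := h3
        _ ≤ ‖t - f‖ := htf
    rw [s_eq Az Bz hB, ← ht]
    have habs : ‖Az - f * Bz‖ = ‖t - f‖ * ‖Bz‖ := by
      have e : Az - f * Bz = (t - f) * Bz := by
        rw [ht]; field_simp
      rw [e, norm_mul]
    rw [habs]
    calc c * (Real.sqrt (1 + ‖t‖ ^ 2) * ‖Bz‖)
        = (c * Real.sqrt (1 + ‖t‖ ^ 2)) * ‖Bz‖ := by ring
      _ ≤ ‖t - f‖ * ‖Bz‖ := mul_le_mul_of_nonneg_right hstep hBpos.le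
private lemma mobius_est (A0 A1 B0 B1 x y : ℂ) (d' : ℝ) (hd' : 0 < d')
    (hdet : A1 * B0 - A0 * B1 ≠ 0)
    (hx1 : d' * (Real.sqrt (1 + ‖x‖ ^ 2) * Real.sqrt (‖A1‖ ^ 2 + ‖B1‖ ^ 2)) ≤ ‖A1 - x * B1‖)
    (hx0 : d' * (Real.sqrt (1 + ‖x‖ ^ 2) * Real.sqrt (‖A0‖ ^ 2 + ‖B0‖ ^ 2)) ≤ ‖A0 - x * B0‖)
    (hy1 : d' * (Real.sqrt (1 + ‖y‖ ^ 2) * Real.sqrt (‖A1‖ ^ 2 + ‖B1‖ ^ 2)) ≤ ‖A1 - y * B1‖)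
    (hy0 : d' * (Real.sqrt (1 + ‖y‖ ^ 2) * Real.sqrt (‖A0‖ ^ 2 + ‖B0‖ ^ 2)) ≤ ‖A0 - y * B0‖) :
    chordal (some ((A1 - x * B1) / (x * B0 - A0))) (some ((A1 - y * B1) / (y * B0 - A0)))
      ≤ ‖x - y‖ / (2 * d' ^ 2 * (Real.sqrt (1 + ‖x‖ ^ 2) * Real.sqrt (1 + ‖y‖ ^ 2))) := by
  set qx := Real.sqrt (1 + ‖x‖ ^ 2) with hqx
  set qy := Real.sqrt (1 + ‖y‖ ^ 2) with hqy
  set s1 := Real.sqrt (‖A1‖ ^ 2 + ‖B1‖ ^ 2) with hs1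
  set s0 := Real.sqrt (‖A0‖ ^ 2 + ‖B0‖ ^ 2) with hs0
  have hs1sq : s1 ^ 2 = ‖A1‖ ^ 2 + ‖B1‖ ^ 2 := Real.sq_sqrt (by positivity)
  have hs0sq : s0 ^ 2 = ‖A0‖ ^ 2 + ‖B0‖ ^ 2 := Real.sq_sqrt (by positivity)
  have hs1nn : 0 ≤ s1 := Real.sqrt_nonneg _
  have hs0nn : 0 ≤ s0 := Real.sqrt_nonneg _
  have hqxpos := q_pos x
  have hqypos := q_pos y
  -- s0, s1 positive
  have hs1pos : 0 < s1 := by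
    apply Real.sqrt_pos.2
    rcases eq_or_ne A1 0 with h | h
    · rcases eq_or_ne B1 0 with h' | h'
      · exfalso; apply hdet; rw [h, h']; ring
      · have h2 : 0 < ‖B1‖ ^ 2 := pow_pos (norm_pos_iff.mpr h') 2
        have h3 : 0 ≤ ‖A1‖ ^ 2 := by positivity
        linarith
    · have h2 : 0 < ‖A1‖ ^ 2 := pow_pos (norm_pos_iff.mpr h) 2
      have h3 : 0 ≤ ‖B1‖ ^ 2 := by positivity
      linarith
  have hs0pos : 0 < s0 := by
    apply Real.sqrt_pos.2
    rcases eq_or_ne A0 0 with h | h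
    · rcases eq_or_ne B0 0 with h' | h'
      · exfalso; apply hdet; rw [h, h']; ring
      · have h2 : 0 < ‖B0‖ ^ 2 := pow_pos (norm_pos_iff.mpr h') 2
        have h3 : 0 ≤ ‖A0‖ ^ 2 := by positivity
        linarith
    · have h2 : 0 < ‖A0‖ ^ 2 := pow_pos (norm_pos_iff.mpr h) 2
      have h3 : 0 ≤ ‖B0‖ ^ 2 := by positivity
      linarith
  -- denominators nonzero
  have hdxabs : ‖x * B0 - A0‖ = ‖A0 - x * B0‖ := by
    rw [← norm_neg]; ring_nf
  have hdyabs : ‖y * B0 - A0‖ = ‖A0 - y * B0‖ := by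
    rw [← norm_neg]; ring_nf
  have hdx : x * B0 - A0 ≠ 0 := by
    intro h0
    rw [h0, norm_zero] at hdxabs
    have : (0:ℝ) < d' * (qx * s0) := by positivity
    rw [← hdxabs] at hx0; linarith
  have hdy : y * B0 - A0 ≠ 0 := by
    intro h0
    rw [h0, norm_zero] at hdyabs
    have : (0:ℝ) < d' * (qy * s0) := by positivity
    rw [← hdyabs] at hy0; linarith
  set u := (A1 - x * B1) / (x * B0 - A0) with hu
  set u' := (A1 - y * B1) / (y * B0 - A0) with hu'
  set Nx := Real.sqrt (‖A1 - x * B1‖ ^ 2 + ‖A0 - x * B0‖ ^ 2) with hNx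
  set Ny := Real.sqrt (‖A1 - y * B1‖ ^ 2 + ‖A0 - y * B0‖ ^ 2) with hNy
  have hdxa : 0 < ‖x * B0 - A0‖ := norm_pos_iff.mpr hdx
  have hdya : 0 < ‖y * B0 - A0‖ := norm_pos_iff.mpr hdy
  -- sqrt(1+|u|^2) = Nx / |x*B0 - A0|
  have hqu : Real.sqrt (1 + ‖u‖ ^ 2) = Nx / ‖x * B0 - A0‖ := by
    have habsu : ‖u‖ = ‖A1 - x * B1‖ / ‖x * B0 - A0‖ :=
      norm_div _ _
    have h1 : 1 + ‖u‖ ^ 2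
        = (‖A1 - x * B1‖ ^ 2 + ‖A0 - x * B0‖ ^ 2)
          / ‖x * B0 - A0‖ ^ 2 := by
      rw [habsu, div_pow, ← hdxabs]
      field_simp
      ring
    rw [h1, Real.sqrt_div (by positivity), Real.sqrt_sq hdxa.le]
  have hqu' : Real.sqrt (1 + ‖u'‖ ^ 2) = Ny / ‖y * B0 - A0‖ := by
    have habsu : ‖u'‖ = ‖A1 - y * B1‖ / ‖y * B0 - A0‖ :=
      norm_div _ _
    have h1 : 1 + ‖u'‖ ^ 2
        = (‖A1 - y * B1‖ ^ 2 + ‖A0 - y * B0‖ ^ 2)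
          / ‖y * B0 - A0‖ ^ 2 := by
      rw [habsu, div_pow, ← hdyabs]
      field_simp
      ring
    rw [h1, Real.sqrt_div (by positivity), Real.sqrt_sq hdya.le]
  -- difference
  have hdiff : u' - u = (x - y) * (A1 * B0 - A0 * B1) / ((y * B0 - A0) * (x * B0 - A0)) := by
    rw [hu, hu', div_sub_div _ _ hdy hdx]
    congr 1
    ring
  -- Nx, Ny positive and lower bounds
  have hNxsq : Nx ^ 2 = ‖A1 - x * B1‖ ^ 2 + ‖A0 - x * B0‖ ^ 2 :=
    Real.sq_sqrt (by positivity)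
  have hNysq : Ny ^ 2 = ‖A1 - y * B1‖ ^ 2 + ‖A0 - y * B0‖ ^ 2 :=
    Real.sq_sqrt (by positivity)
  have hNxnn : 0 ≤ Nx := Real.sqrt_nonneg _
  have hNynn : 0 ≤ Ny := Real.sqrt_nonneg _
  set R := Real.sqrt (s1 ^ 2 + s0 ^ 2) with hR
  have hRsq : R ^ 2 = s1 ^ 2 + s0 ^ 2 := Real.sq_sqrt (by positivity)
  have hRpos : 0 < R := Real.sqrt_pos.2 (by positivity)
  have hNxlb : d' * (qx * R) ≤ Nx := by
    apply sqrt_lb (by positivity)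
    have e1 : (d' * (qx * R)) ^ 2 = (d' * (qx * s1)) ^ 2 + (d' * (qx * s0)) ^ 2 := by
      linear_combination (d' ^ 2 * qx ^ 2) * hRsq
    rw [e1]
    have b1 : (d' * (qx * s1)) ^ 2 ≤ ‖A1 - x * B1‖ ^ 2 :=
      pow_le_pow_left₀ (by positivity) hx1 2
    have b0 : (d' * (qx * s0)) ^ 2 ≤ ‖A0 - x * B0‖ ^ 2 :=
      pow_le_pow_left₀ (by positivity) hx0 2
    linarith
  have hNylb : d' * (qy * R) ≤ Ny := by
    apply sqrt_lb (by positivity)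
    have e1 : (d' * (qy * R)) ^ 2 = (d' * (qy * s1)) ^ 2 + (d' * (qy * s0)) ^ 2 := by
      linear_combination (d' ^ 2 * qy ^ 2) * hRsq
    rw [e1]
    have b1 : (d' * (qy * s1)) ^ 2 ≤ ‖A1 - y * B1‖ ^ 2 :=
      pow_le_pow_left₀ (by positivity) hy1 2
    have b0 : (d' * (qy * s0)) ^ 2 ≤ ‖A0 - y * B0‖ ^ 2 :=
      pow_le_pow_left₀ (by positivity) hy0 2
    linarith
  have hNxpos : 0 < Nx := lt_of_lt_of_le (by positivity) hNxlb
  have hNypos : 0 < Ny := lt_of_lt_of_le (by positivity) hNylb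
  -- |det| ≤ s1 * s0 ≤ R^2 / 2
  have hD : ‖A1 * B0 - A0 * B1‖ ≤ R ^ 2 / 2 := by
    have h1 : ‖A1 * B0 - A0 * B1‖
        ≤ ‖A1‖ * ‖B0‖ + ‖B1‖ * ‖A0‖ := by
      have := norm_sub_le (A1 * B0) (A0 * B1)
      simp only [norm_mul] at this
      calc ‖A1 * B0 - A0 * B1‖ ≤ ‖A1‖ * ‖B0‖
            + ‖A0‖ * ‖B1‖ := by simpa [norm_mul] using this
        _ = _ := by ring
    have h2 := cauchy2 (‖A1‖) (‖B0‖) (‖B1‖) (‖A0‖)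
      (norm_nonneg _) (norm_nonneg _) (norm_nonneg _) (norm_nonneg _)
    have h3 : Real.sqrt (‖B0‖ ^ 2 + ‖A0‖ ^ 2) = s0 := by
      rw [hs0, add_comm]
    rw [h3, ← hs1] at h2
    have h4 : s1 * s0 ≤ R ^ 2 / 2 := by
      have e : s1 ^ 2 + s0 ^ 2 - 2 * (s1 * s0) = (s1 - s0) ^ 2 := by ring
      linarith [sq_nonneg (s1 - s0)]
    linarith
  -- now compute chordal
  have hch : chordal (some u) (some u')
      = ‖x - y‖ * ‖A1 * B0 - A0 * B1‖ / (Nx * Ny) := by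
    have e : ∀ (p D dx dy Nx Ny : ℝ), dx ≠ 0 → dy ≠ 0 → Nx ≠ 0 → Ny ≠ 0 →
        p * D / (dy * dx) / (Nx / dx * (Ny / dy)) = p * D / (Nx * Ny) := by
      intros p D dx dy Nx Ny h1 h2 h3 h4
      field_simp
    show ‖u' - u‖ / (Real.sqrt (1 + ‖u‖ ^ 2) * Real.sqrt (1 + ‖u'‖ ^ 2)) = _
    rw [hqu, hqu', hdiff, norm_div, norm_mul, norm_mul]
    exact e _ _ _ _ _ _ hdxa.ne' hdya.ne' (ne_of_gt (lt_of_lt_of_le (by positivity) hNxlb)) (ne_of_gt (lt_of_lt_of_le (by positivity) hNylb))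
  rw [hch]
  have goal_le : ‖x - y‖ * ‖A1 * B0 - A0 * B1‖ / (Nx * Ny)
      ≤ ‖x - y‖ * (R ^ 2 / 2) / ((d' * (qx * R)) * (d' * (qy * R))) := by
    apply div_le_div₀ (by positivity)
      (mul_le_mul_of_nonneg_left hD (norm_nonneg _)) (by positivity)
      (mul_le_mul hNxlb hNylb (by positivity) hNxnn)
  refine goal_le.trans (le_of_eq ?_)
  field_simp

/-- Under the hypotheses of the general-divergence theorem (odd part of `C`
converges to `f1`, even part to `f2`, `f1 ≠ f2`, bounds on `|b i|` and
`|a (2i+1)/a (2i)|`), if `C` converged generally to a finite value `f` with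
`f ≠ f1` and `f ≠ f2`, witnessed by sequences `v`, `w`, then
`d(v (2n), w (2n)) → 0` (which contradicts `liminf d(v n, w n) > 0`); hence any
finite general limit must equal `f1` or `f2`. -/
theorem chordal_even_witnesses_tendsto_zero
    (a b A B : ℕ → ℂ) (f1 f2 f : ℂ) (c1 c2 c3 : ℝ)
    (v w : ℕ → Option ℂ)
    (hc1 : 0 < c1) (hc2 : 0 < c2) (hc3 : 0 < c3)
    (hane : ∀ i, 1 ≤ i → a i ≠ 0)
    (hb : ∀ i, 1 ≤ i → c1 ≤ ‖b i‖ ∧ ‖b i‖ ≤ c2)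
    (hratio : ∀ i, 1 ≤ i → ‖a (2 * i + 1) / a (2 * i)‖ ≤ c3)
    (hA0 : A 0 = 1) (hA1 : A 1 = b 0) (hB0 : B 0 = 0) (hB1 : B 1 = 1)
    (hA : ∀ n, A (n + 2) = b (n + 1) * A (n + 1) + a (n + 1) * A n)
    (hB : ∀ n, B (n + 2) = b (n + 1) * B (n + 1) + a (n + 1) * B n)
    (hodd : Tendsto (fun n => A (2 * n + 2) / B (2 * n + 2)) atTop (𝓝 f1))
    (heven : Tendsto (fun n => A (2 * n + 1) / B (2 * n + 1)) atTop (𝓝 f2))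
    (hf : f1 ≠ f2) (hff1 : f ≠ f1) (hff2 : f ≠ f2)
    (hv : Tendsto (fun n => chordal (modApprox A B n (v n)) (some f)) atTop (𝓝 0))
    (hw : Tendsto (fun n => chordal (modApprox A B n (w n)) (some f)) atTop (𝓝 0)) :
    Tendsto (fun n => chordal (v (2 * n)) (w (2 * n))) atTop (𝓝 0) := by
  have hdet := det_ne a b A B hane hA0 hA1 hB0 hB1 hA hB
  set qf := Real.sqrt (1 + ‖f‖ ^ 2) with hqf
  have hqfpos : 0 < qf := q_pos f
  -- the constant c
  set c : ℝ := min (min 1 ((‖f - f2‖ / 2) / (2 + ‖f2‖)))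
      ((‖f - f1‖ / 2) / (2 + ‖f1‖)) with hcdef
  have habs2 : 0 < ‖f - f2‖ := norm_pos_iff.mpr (sub_ne_zero.2 hff2)
  have habs1 : 0 < ‖f - f1‖ := norm_pos_iff.mpr (sub_ne_zero.2 hff1)
  have hcpos : 0 < c := by
    apply lt_min (lt_min one_pos ?_) ?_
    · exact div_pos (by positivity) (by positivity)
    · exact div_pos (by positivity) (by positivity)
  have hcone : c ≤ 1 := le_trans (min_le_left _ _) (min_le_left _ _)
  set M : ℝ := 2 * ‖f‖ + 1 with hMdef
  have hM0 : (0:ℝ) ≤ M := by positivity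
  set d' : ℝ := c / (2 * (1 + M)) with hd'def
  have hd'pos : 0 < d' := by positivity
  set ε₀ : ℝ := min (c / (2 * (1 + M) * qf)) (1 / (2 * qf)) with hε₀def
  have hε₀pos : 0 < ε₀ := lt_min (by positivity) (by positivity)
  have hε₀qf : ε₀ * qf ≤ 1 / 2 := by
    have h1 : ε₀ ≤ 1 / (2 * qf) := min_le_right _ _
    calc ε₀ * qf ≤ (1 / (2 * qf)) * qf := mul_le_mul_of_nonneg_right h1 hqfpos.le
      _ = 1 / 2 := by field_simp
  have hε₀c : ε₀ * ((1 + M) * qf) ≤ c / 2 := by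
    have h1 : ε₀ ≤ c / (2 * (1 + M) * qf) := min_le_left _ _
    calc ε₀ * ((1 + M) * qf) ≤ (c / (2 * (1 + M) * qf)) * ((1 + M) * qf) :=
          mul_le_mul_of_nonneg_right h1 (by positivity)
      _ = c / 2 := by field_simp
  have hε₀lt1 : ε₀ < 1 / qf := by
    have h1 : ε₀ ≤ 1 / (2 * qf) := min_le_right _ _
    have h2 : 1 / (2 * qf) < 1 / qf := by
      rw [div_lt_div_iff₀ (by positivity) (by positivity)]
      nlinarith
    linarith
  have hε₀ltc : ε₀ < c / qf := by
    have h1 : ε₀ ≤ c / (2 * (1 + M) * qf) := min_le_left _ _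
    have h2 : c / (2 * (1 + M) * qf) < c / qf := by
      rw [div_lt_div_iff₀ (by positivity) (by positivity)]
      nlinarith [mul_pos hcpos hqfpos]
    linarith
  -- eventual lower bounds on the chordal distance from f to the classical approximants
  have EvOdd : ∀ᶠ n in atTop,
      c * Real.sqrt (‖A (2 * n + 1)‖ ^ 2 + ‖B (2 * n + 1)‖ ^ 2)
        ≤ ‖A (2 * n + 1) - f * B (2 * n + 1)‖ := by
    have hpos : 0 < min 1 (‖f - f2‖ / 2) := lt_min one_pos (by positivity)
    have h1 : ∀ᶠ n in atTop,
        ‖A (2 * n + 1) / B (2 * n + 1) - f2‖ < min 1 (‖f - f2‖ / 2) := by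
      have h2 := heven.eventually (Metric.ball_mem_nhds f2 hpos)
      simpa [Metric.mem_ball, Complex.dist_eq] using h2
    filter_upwards [h1] with n hn
    apply ev_lb f f2 c hcpos hcone (le_trans (min_le_left _ _) (min_le_right _ _)) _ _ ?_ hn
    rintro ⟨h1', h2'⟩
    exact hdet (2 * n) (by rw [h1', h2']; ring)
  have EvEven : ∀ᶠ n in atTop,
      c * Real.sqrt (‖A (2 * n)‖ ^ 2 + ‖B (2 * n)‖ ^ 2)
        ≤ ‖A (2 * n) - f * B (2 * n)‖ := by
    have hpos : 0 < min 1 (‖f - f1‖ / 2) := lt_min one_pos (by positivity)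
    have h1 : ∀ᶠ n in atTop,
        ‖A (2 * n + 2) / B (2 * n + 2) - f1‖ < min 1 (‖f - f1‖ / 2) := by
      have h2 := hodd.eventually (Metric.ball_mem_nhds f1 hpos)
      simpa [Metric.mem_ball, Complex.dist_eq] using h2
    obtain ⟨N, hN⟩ := eventually_atTop.1 h1
    refine eventually_atTop.2 ⟨N + 1, fun n hn => ?_⟩
    have h2 := hN (n - 1) (by omega)
    have h3 : 2 * (n - 1) + 2 = 2 * n := by omega
    rw [h3] at h2
    apply ev_lb f f1 c hcpos hcone (min_le_right _ _) _ _ ?_ h2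
    rintro ⟨h1', h2'⟩
    exact hdet (2 * n) (by rw [h1', h2']; ring)
  -- the main extraction step
  have key : ∀ n : ℕ,
      (c * Real.sqrt (‖A (2 * n + 1)‖ ^ 2 + ‖B (2 * n + 1)‖ ^ 2)
        ≤ ‖A (2 * n + 1) - f * B (2 * n + 1)‖) →
      (c * Real.sqrt (‖A (2 * n)‖ ^ 2 + ‖B (2 * n)‖ ^ 2)
        ≤ ‖A (2 * n) - f * B (2 * n)‖) →
      ∀ o : Option ℂ, chordal (modApprox A B (2 * n) o) (some f) ≤ ε₀ →
      ∃ u x : ℂ, o = some u ∧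
        chordal (some x) (some f) = chordal (modApprox A B (2 * n) o) (some f) ∧
        u = (A (2 * n + 1) - x * B (2 * n + 1)) / (x * B (2 * n) - A (2 * n)) ∧
        (d' * (Real.sqrt (1 + ‖x‖ ^ 2)
          * Real.sqrt (‖A (2 * n + 1)‖ ^ 2 + ‖B (2 * n + 1)‖ ^ 2))
          ≤ ‖A (2 * n + 1) - x * B (2 * n + 1)‖) ∧
        (d' * (Real.sqrt (1 + ‖x‖ ^ 2)
          * Real.sqrt (‖A (2 * n)‖ ^ 2 + ‖B (2 * n)‖ ^ 2))
          ≤ ‖A (2 * n) - x * B (2 * n)‖) := by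
    intro n hOdd hEven o ho
    have hnz : ¬(A (2 * n) = 0 ∧ B (2 * n) = 0) := by
      rintro ⟨h1', h2'⟩
      exact hdet (2 * n) (by rw [h1', h2']; ring)
    have hs0pos := s_pos hnz
    match o with
    | none =>
      exfalso
      by_cases hb0 : B (2 * n) = 0
      · rw [show modApprox A B (2 * n) none = none from by simp [modApprox, hb0]] at ho
        have h1 : chordal none (some f) = 1 / qf := rfl
        rw [h1] at ho
        have h2 : (0:ℝ) < 1 / (2 * qf) := by positivity
        have h3 : ε₀ ≤ 1 / (2 * qf) := min_le_right _ _
        have h4 : 1 / (2 * qf) < 1 / qf := by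
          rw [div_lt_div_iff₀ (by positivity) (by positivity)]; nlinarith
        linarith
      · rw [show modApprox A B (2 * n) none = some (A (2 * n) / B (2 * n)) from by
            simp [modApprox, hb0]] at ho
        set t := A (2 * n) / B (2 * n) with htdef
        have hBpos : 0 < ‖B (2 * n)‖ := norm_pos_iff.mpr hb0
        have hse := s_eq (A (2 * n)) (B (2 * n)) hb0
        have habs : ‖A (2 * n) - f * B (2 * n)‖
            = ‖t - f‖ * ‖B (2 * n)‖ := by
          have e : A (2 * n) - f * B (2 * n) = (t - f) * B (2 * n) := by
            rw [htdef]; field_simp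
          rw [e, norm_mul]
        rw [habs, hse, ← htdef] at hEven
        have h2 : c * Real.sqrt (1 + ‖t‖ ^ 2) ≤ ‖t - f‖ := by
          have h3 : (c * Real.sqrt (1 + ‖t‖ ^ 2)) * ‖B (2 * n)‖
              ≤ ‖t - f‖ * ‖B (2 * n)‖ := by
            calc (c * Real.sqrt (1 + ‖t‖ ^ 2)) * ‖B (2 * n)‖
                = c * (Real.sqrt (1 + ‖t‖ ^ 2) * ‖B (2 * n)‖) := by ring
              _ ≤ _ := hEven
          exact le_of_mul_le_mul_right h3 hBpos
        have h4 : chordal (some t) (some f)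
            = ‖f - t‖ / (Real.sqrt (1 + ‖t‖ ^ 2) * qf) := rfl
        have h5 : c / qf ≤ chordal (some t) (some f) := by
          rw [h4, le_div_iff₀ (by positivity)]
          calc c / qf * (Real.sqrt (1 + ‖t‖ ^ 2) * qf)
              = c * Real.sqrt (1 + ‖t‖ ^ 2) := by field_simp
            _ ≤ ‖t - f‖ := h2
            _ = ‖f - t‖ := by rw [← norm_neg]; ring_nf
        linarith
    | some u =>
      by_cases hden : B (2 * n + 1) + u * B (2 * n) = 0
      · exfalso
        rw [show modApprox A B (2 * n) (some u) = none from by simp [modApprox, hden]] at ho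
        have h1 : chordal none (some f) = 1 / qf := rfl
        rw [h1] at ho
        linarith
      · have hmod : modApprox A B (2 * n) (some u)
            = some ((A (2 * n + 1) + u * A (2 * n)) / (B (2 * n + 1) + u * B (2 * n))) := by
          simp [modApprox, hden]
        set x := (A (2 * n + 1) + u * A (2 * n)) / (B (2 * n + 1) + u * B (2 * n)) with hxdef
        rw [hmod] at ho
        have hxq := q_pos x
        have hxf' : ‖f - x‖ ≤ ε₀ * (Real.sqrt (1 + ‖x‖ ^ 2) * qf) := by
          have h3 : chordal (some x) (some f)
              = ‖f - x‖ / (Real.sqrt (1 + ‖x‖ ^ 2) * qf) := rfl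
          rw [h3] at ho
          exact (div_le_iff₀ (by positivity)).1 ho
        have hxM : ‖x‖ ≤ M := by
          have h4 : ‖x‖ ≤ ‖f‖ + ‖f - x‖ := by
            have h5 := norm_add_le f (-(f - x))
            rw [norm_neg] at h5
            calc ‖x‖ = ‖f + -(f - x)‖ := by congr 1; ring
              _ ≤ _ := h5
          have h6 : ‖f - x‖ ≤ (1 + ‖x‖) / 2 := by
            calc ‖f - x‖ ≤ ε₀ * (Real.sqrt (1 + ‖x‖ ^ 2) * qf) := hxf'
              _ = (ε₀ * qf) * Real.sqrt (1 + ‖x‖ ^ 2) := by ring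
              _ ≤ (1 / 2) * (1 + ‖x‖) :=
                  mul_le_mul hε₀qf (q_le x) (q_pos x).le (by norm_num)
              _ = (1 + ‖x‖) / 2 := by ring
          rw [hMdef]
          linarith
        have hxf : ‖x - f‖ ≤ c / 2 := by
          have hsym : ‖x - f‖ = ‖f - x‖ := by
            rw [← norm_neg]; ring_nf
          rw [hsym]
          calc ‖f - x‖ ≤ ε₀ * (Real.sqrt (1 + ‖x‖ ^ 2) * qf) := hxf'
            _ ≤ ε₀ * ((1 + M) * qf) := by
                apply mul_le_mul_of_nonneg_left _ hε₀pos.le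
                apply mul_le_mul_of_nonneg_right _ hqfpos.le
                exact le_trans (q_le x) (by linarith)
            _ ≤ c / 2 := hε₀c
        have hT1 := term_lb (A (2 * n + 1)) (B (2 * n + 1)) x f c M hcpos hM0 hxM hxf hOdd
        have hT0 := term_lb (A (2 * n)) (B (2 * n)) x f c M hcpos hM0 hxM hxf hEven
        have hxden : x * B (2 * n) - A (2 * n) ≠ 0 := by
          intro h0
          have h1 : ‖A (2 * n) - x * B (2 * n)‖ = 0 := by
            rw [show A (2 * n) - x * B (2 * n) = -(x * B (2 * n) - A (2 * n)) from by ring,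
              norm_neg, h0, norm_zero]
          have h2 : (0:ℝ) < c / (2 * (1 + M)) * (Real.sqrt (1 + ‖x‖ ^ 2)
              * Real.sqrt (‖A (2 * n)‖ ^ 2 + ‖B (2 * n)‖ ^ 2)) := by
            positivity
          linarith
        have hufor : u = (A (2 * n + 1) - x * B (2 * n + 1)) / (x * B (2 * n) - A (2 * n)) := by
          rw [eq_div_iff hxden]
          have hxeq : x * (B (2 * n + 1) + u * B (2 * n)) = A (2 * n + 1) + u * A (2 * n) := by
            rw [hxdef]; field_simp
          linear_combination hxeq
        exact ⟨u, x, rfl, by rw [hmod], hufor, hT1, hT0⟩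
  -- assemble eventual bound
  have h2n : Tendsto (fun n : ℕ => 2 * n) atTop atTop := by
    apply tendsto_atTop_atTop_of_monotone (fun m n h => by omega)
    intro k; exact ⟨k, by omega⟩
  have hv2 : Tendsto (fun n => chordal (modApprox A B (2 * n) (v (2 * n))) (some f))
      atTop (𝓝 0) := hv.comp h2n
  have hw2 : Tendsto (fun n => chordal (modApprox A B (2 * n) (w (2 * n))) (some f))
      atTop (𝓝 0) := hw.comp h2n
  have hsv : ∀ᶠ n in atTop, chordal (modApprox A B (2 * n) (v (2 * n))) (some f) ≤ ε₀ :=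
    (hv2.eventually (Iio_mem_nhds hε₀pos)).mono fun n h => le_of_lt h
  have hsw : ∀ᶠ n in atTop, chordal (modApprox A B (2 * n) (w (2 * n))) (some f) ≤ ε₀ :=
    (hw2.eventually (Iio_mem_nhds hε₀pos)).mono fun n h => le_of_lt h
  set C : ℝ := qf / (2 * d' ^ 2) with hCdef
  have hC0 : 0 ≤ C := by positivity
  have hbound : ∀ᶠ n in atTop, chordal (v (2 * n)) (w (2 * n))
      ≤ C * (chordal (modApprox A B (2 * n) (v (2 * n))) (some f)
        + chordal (modApprox A B (2 * n) (w (2 * n))) (some f)) := by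
    filter_upwards [EvOdd, EvEven, hsv, hsw] with n hOdd hEven hvn hwn
    obtain ⟨u, x, hvu, hvx, hufor, hx1, hx0⟩ := key n hOdd hEven (v (2 * n)) hvn
    obtain ⟨u', y, hwu, hwy, hufor', hy1, hy0⟩ := key n hOdd hEven (w (2 * n)) hwn
    have hest := mobius_est (A (2 * n)) (A (2 * n + 1)) (B (2 * n)) (B (2 * n + 1)) x y d'
      hd'pos (hdet (2 * n)) hx1 hx0 hy1 hy0
    rw [← hvx, ← hwy, hvu, hwu, hufor, hufor']
    refine le_trans hest ?_
    set ex := chordal (some x) (some f) with hexdef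
    set ey := chordal (some y) (some f) with heydef
    have hex0 : 0 ≤ ex := chordal_nonneg _ _
    have hey0 : 0 ≤ ey := chordal_nonneg _ _
    set qx := Real.sqrt (1 + ‖x‖ ^ 2) with hqxdef
    set qy := Real.sqrt (1 + ‖y‖ ^ 2) with hqydef
    have hqxpos : 0 < qx := q_pos x
    have hqypos : 0 < qy := q_pos y
    have hxfe : ‖x - f‖ = ex * (qx * qf) := by
      have h1 : ex = ‖f - x‖ / (qx * qf) := rfl
      have hsym : ‖x - f‖ = ‖f - x‖ := by
        rw [← norm_neg]; ring_nf
      rw [h1, hsym]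
      field_simp
    have hyfe : ‖f - y‖ = ey * (qy * qf) := by
      have h1 : ey = ‖f - y‖ / (qy * qf) := rfl
      rw [h1]
      field_simp
    have htri : ‖x - y‖ ≤ ex * (qx * qf) + ey * (qy * qf) := by
      rw [← hxfe, ← hyfe]
      calc ‖x - y‖ = ‖(x - f) + (f - y)‖ := by congr 1; ring
        _ ≤ _ := norm_add_le _ _
    have hfinal : (ex * (qx * qf) + ey * (qy * qf)) / (2 * d' ^ 2 * (qx * qy))
        ≤ C * (ex + ey) := by
      have he : (ex * (qx * qf) + ey * (qy * qf)) / (2 * d' ^ 2 * (qx * qy))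
          = (qf / (2 * d' ^ 2)) * (ex / qy + ey / qx) := by
        field_simp
      rw [he, hCdef]
      apply mul_le_mul_of_nonneg_left _ (by positivity)
      have h1 : ex / qy ≤ ex := by
        apply div_le_self hex0 (one_le_q y)
      have h2 : ey / qx ≤ ey := by
        apply div_le_self hey0 (one_le_q x)
      linarith
    calc ‖x - y‖ / (2 * d' ^ 2 * (qx * qy))
        ≤ (ex * (qx * qf) + ey * (qy * qf)) / (2 * d' ^ 2 * (qx * qy)) := by
          apply div_le_div_of_nonneg_right htri (by positivity)
      _ ≤ C * (ex + ey) := hfinal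
  apply squeeze_zero' (Eventually.of_forall fun n => chordal_nonneg _ _) hbound
  have hlim := (hv2.add hw2).const_mul C
  simpa using hlim
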